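/- Let W, X, Y, Z be Dedekind complete Riesz spaces and let B₀ : W → X be a positive regular operator. Then for all regular operators A, C : Y → Z, one has |M_{A,B₀}| = M_{|A|,B₀} and M_{A,B₀} ∨ M_{C,B₀} = M_{A∨C,B₀} in L^r(L^r(X,Y), L^r(W,Z)). -/

import Mathlib

open Set Filter

namespace TwoSided

section Defs

variable {E F : Type*}
  [AddCommGroup E] [Lattice E] [Module ℝ E]
  [AddCommGroup F] [Lattice F] [Module ℝ F]

/-- A linear operator between ordered vector spaces is positive if it maps the
positive cone into the positive cone. -/
def Positive (T : E →ₗ[ℝ] F) : Prop := ∀ x : E, 0 ≤ x → 0 ≤ T x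

/-- A regular operator is a difference of two positive operators. -/
def IsRegular (T : E →ₗ[ℝ] F) : Prop :=
  ∃ P Q : E →ₗ[ℝ] F, Positive P ∧ Positive Q ∧ T = P - Q

/-- `U` is the supremum of `S` and `T` in the operator order. -/
def IsOpSup (S T U : E →ₗ[ℝ] F) : Prop :=
  Positive (U - S) ∧ Positive (U - T) ∧
    ∀ V : E →ₗ[ℝ] F, Positive (V - S) → Positive (V - T) → Positive (V - U)

/-- `U` is the infimum of `S` and `T` in the operator order. -/
def IsOpInf (S T U : E →ₗ[ℝ] F) : Prop :=
  Positive (S - U) ∧ Positive (T - U) ∧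
    ∀ V : E →ₗ[ℝ] F, Positive (S - V) → Positive (T - V) → Positive (U - V)

/-- `U` is the least upper bound of the set `s` of operators in the operator order. -/
def IsOpLUB (s : Set (E →ₗ[ℝ] F)) (U : E →ₗ[ℝ] F) : Prop :=
  (∀ C ∈ s, Positive (U - C)) ∧
    ∀ V : E →ₗ[ℝ] F, (∀ C ∈ s, Positive (V - C)) → Positive (V - U)

/-- `M` is the modulus `|T| = T ⊔ (-T)` of the operator `T`. -/
def IsModulus (T M : E →ₗ[ℝ] F) : Prop := IsOpSup T (-T) M

/-- An operator is order continuous if it maps nets decreasing to `0`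
to nets order converging to `0`. -/
def OrdContinuous (T : E →ₗ[ℝ] F) : Prop :=
  ∀ (ι : Type) [SemilatticeSup ι] [Nonempty ι] (a : ι → E),
    Antitone a → IsGLB (Set.range a) 0 →
      ∃ b : ι → F, Antitone b ∧ IsGLB (Set.range b) 0 ∧
        ∀ i, T (a i) ≤ b i ∧ -(T (a i)) ≤ b i

/-- A lattice is Dedekind complete if every nonempty set bounded above has a
least upper bound. -/
def DedekindComplete (G : Type*) [Preorder G] : Prop :=
  ∀ s : Set G, s.Nonempty → BddAbove s → ∃ a, IsLUB s a

end Defs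

section Two

variable {W X Y Z : Type*}
  [AddCommGroup W] [Lattice W] [Module ℝ W]
  [AddCommGroup X] [Lattice X] [Module ℝ X]
  [AddCommGroup Y] [Lattice Y] [Module ℝ Y]
  [AddCommGroup Z] [Lattice Z] [Module ℝ Z]

/-- The two-sided multiplication operator `T ↦ A ∘ T ∘ B`. -/
def MAB (A : Y →ₗ[ℝ] Z) (B : W →ₗ[ℝ] X) :
    (X →ₗ[ℝ] Y) →ₗ[ℝ] (W →ₗ[ℝ] Z) where
  toFun T := A ∘ₗ T ∘ₗ B
  map_add' := by intro S T; ext w; simp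
  map_smul' := by intro c T; ext w; simp

/-- Positivity for operators between spaces of operators, with respect to the
operator order. -/
def Positive2 (Φ : (X →ₗ[ℝ] Y) →ₗ[ℝ] (W →ₗ[ℝ] Z)) : Prop :=
  ∀ T : X →ₗ[ℝ] Y, Positive T → Positive (Φ T)

def IsRegular2 (Φ : (X →ₗ[ℝ] Y) →ₗ[ℝ] (W →ₗ[ℝ] Z)) : Prop :=
  ∃ Φ₁ Φ₂, Positive2 (W := W) (X := X) (Y := Y) (Z := Z) Φ₁ ∧ Positive2 Φ₂ ∧ Φ = Φ₁ - Φ₂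

def IsOpSup2 (Φ Ψ Θ : (X →ₗ[ℝ] Y) →ₗ[ℝ] (W →ₗ[ℝ] Z)) : Prop :=
  Positive2 (Θ - Φ) ∧ Positive2 (Θ - Ψ) ∧
    ∀ Ξ : (X →ₗ[ℝ] Y) →ₗ[ℝ] (W →ₗ[ℝ] Z),
      Positive2 (Ξ - Φ) → Positive2 (Ξ - Ψ) → Positive2 (Ξ - Θ)

def IsOpInf2 (Φ Ψ Θ : (X →ₗ[ℝ] Y) →ₗ[ℝ] (W →ₗ[ℝ] Z)) : Prop :=
  Positive2 (Φ - Θ) ∧ Positive2 (Ψ - Θ) ∧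
    ∀ Ξ : (X →ₗ[ℝ] Y) →ₗ[ℝ] (W →ₗ[ℝ] Z),
      Positive2 (Φ - Ξ) → Positive2 (Ψ - Ξ) → Positive2 (Θ - Ξ)

def IsModulus2 (Φ M : (X →ₗ[ℝ] Y) →ₗ[ℝ] (W →ₗ[ℝ] Z)) : Prop := IsOpSup2 Φ (-Φ) M

end Two

end TwoSided

section AuxProof

open TwoSided Submodule

variable {E F : Type*}
  [AddCommGroup E] [Lattice E] [CovariantClass E E (· + ·) (· ≤ ·)]
  [Module ℝ E] [PosSMulMono ℝ E]
  [AddCommGroup F] [Lattice F] [CovariantClass F F (· + ·) (· ≤ ·)]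
  [Module ℝ F] [PosSMulMono ℝ F]

/-- Riesz decomposition property in a lattice-ordered abelian group. -/
theorem aux_riesz_decomp {y y' z : E} (hy : 0 ≤ y) (hy' : 0 ≤ y')
    (hz1 : 0 ≤ z) (hz2 : z ≤ y + y') :
    ∃ u u', 0 ≤ u ∧ 0 ≤ u' ∧ u ≤ y ∧ u' ≤ y' ∧ z = u + u' := by
  refine ⟨z ⊓ y, z - z ⊓ y, le_inf hz1 hy, sub_nonneg.2 inf_le_left, inf_le_right, ?_, by abel⟩
  rw [sub_inf]
  exact sup_le (by simpa using hy') (sub_le_iff_le_add'.2 hz2)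

theorem aux_smul_sup {r : ℝ} (hr : 0 < r) (a b : E) : r • (a ⊔ b) = r • a ⊔ r • b := by
  apply le_antisymm
  · have h1 : a ⊔ b ≤ r⁻¹ • (r • a ⊔ r • b) := by
      apply sup_le
      · calc a = r⁻¹ • (r • a) := by rw [smul_smul, inv_mul_cancel₀ hr.ne', one_smul]
          _ ≤ r⁻¹ • (r • a ⊔ r • b) :=
            smul_le_smul_of_nonneg_left le_sup_left (inv_nonneg.2 hr.le)
      · calc b = r⁻¹ • (r • b) := by rw [smul_smul, inv_mul_cancel₀ hr.ne', one_smul]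
          _ ≤ r⁻¹ • (r • a ⊔ r • b) :=
            smul_le_smul_of_nonneg_left le_sup_right (inv_nonneg.2 hr.le)
    calc r • (a ⊔ b) ≤ r • (r⁻¹ • (r • a ⊔ r • b)) :=
          smul_le_smul_of_nonneg_left h1 hr.le
      _ = r • a ⊔ r • b := by rw [smul_smul, mul_inv_cancel₀ hr.ne', one_smul]
  · exact sup_le (smul_le_smul_of_nonneg_left le_sup_left hr.le)
      (smul_le_smul_of_nonneg_left le_sup_right hr.le)

theorem aux_smul_posPart (r : ℝ) (hr : 0 ≤ r) (a : E) : (r • a)⁺ = r • a⁺ := by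
  rcases eq_or_lt_of_le hr with h | h
  · simp [← h]
  · rw [posPart_def, posPart_def, aux_smul_sup h, smul_zero]

/-- Riesz–Kantorovich set. -/
def dSet (A C : E →ₗ[ℝ] F) (y : E) : Set F :=
  {z | ∃ y₁ y₂ : E, 0 ≤ y₁ ∧ 0 ≤ y₂ ∧ y₁ + y₂ = y ∧ z = A y₁ + C y₂}

/-- Riesz–Kantorovich: existence of the supremum of two regular operators, together
with the pointwise formula on the positive cone. -/
theorem aux_rk (hF : DedekindComplete F) {A C : E →ₗ[ℝ] F}
    (hA : IsRegular A) (hC : IsRegular C) :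
    ∃ V : E →ₗ[ℝ] F, IsOpSup A C V ∧ ∀ y : E, 0 ≤ y → IsLUB (dSet A C y) (V y) := by
  -- a common dominating positive operator
  obtain ⟨D, hD, hbdd⟩ : ∃ D : E →ₗ[ℝ] F, Positive D ∧
      ∀ y₁ y₂ : E, 0 ≤ y₁ → 0 ≤ y₂ → A y₁ + C y₂ ≤ D (y₁ + y₂) := by
    obtain ⟨P₁, Q₁, hP₁, hQ₁, hAe⟩ := hA
    obtain ⟨P₂, Q₂, hP₂, hQ₂, hCe⟩ := hC
    refine ⟨P₁ + P₂, fun x hx => add_nonneg (hP₁ x hx) (hP₂ x hx), fun y₁ y₂ h₁ h₂ => ?_⟩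
    have e1 : A y₁ ≤ P₁ y₁ := by
      rw [hAe, LinearMap.sub_apply]
      exact sub_le_self _ (hQ₁ y₁ h₁)
    have e2 : C y₂ ≤ P₂ y₂ := by
      rw [hCe, LinearMap.sub_apply]
      exact sub_le_self _ (hQ₂ y₂ h₂)
    calc A y₁ + C y₂ ≤ P₁ y₁ + P₂ y₂ := add_le_add e1 e2
      _ ≤ (P₁ y₁ + P₁ y₂) + (P₂ y₁ + P₂ y₂) :=
          add_le_add (le_add_of_nonneg_right (hP₁ y₂ h₂)) (le_add_of_nonneg_left (hP₂ y₁ h₁))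
      _ = (P₁ + P₂) (y₁ + y₂) := by
          simp only [LinearMap.add_apply, map_add]; abel
  have hex : ∀ y : E, ∃ z : F, 0 ≤ y → IsLUB (dSet A C y) z := by
    intro y
    by_cases hy : 0 ≤ y
    · obtain ⟨z, hz⟩ := hF (dSet A C y)
        ⟨A y, y, 0, hy, le_rfl, add_zero y, by simp⟩
        ⟨D y, by rintro z ⟨y₁, y₂, h₁, h₂, hs, rfl⟩; rw [← hs]; exact hbdd y₁ y₂ h₁ h₂⟩
      exact ⟨z, fun _ => hz⟩
    · exact ⟨0, fun h => absurd h hy⟩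
  choose v hv using hex
  have hmem : ∀ {y y₁ y₂ : E}, 0 ≤ y₁ → 0 ≤ y₂ → y₁ + y₂ = y → A y₁ + C y₂ ≤ v y := by
    intro y y₁ y₂ h₁ h₂ hs
    have hy : 0 ≤ y := hs ▸ add_nonneg h₁ h₂
    exact (hv y hy).1 ⟨_, _, h₁, h₂, hs, rfl⟩
  have hzero : v 0 = 0 := by
    have hlub : IsLUB (dSet A C 0) 0 := by
      constructor
      · rintro z ⟨y₁, y₂, h₁, h₂, hs, rfl⟩
        have hy₁ : y₁ = 0 := le_antisymm (by
          calc y₁ ≤ y₁ + y₂ := le_add_of_nonneg_right h₂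
            _ = 0 := hs) h₁
        have hy₂ : y₂ = 0 := by rwa [hy₁, zero_add] at hs
        simp [hy₁, hy₂]
      · intro b hb
        exact hb ⟨0, 0, le_rfl, le_rfl, add_zero 0, by simp⟩
    exact (hv 0 le_rfl).unique hlub
  have hadd : ∀ y z : E, 0 ≤ y → 0 ≤ z → v (y + z) = v y + v z := by
    intro y z hy hz
    refine (hv (y + z) (add_nonneg hy hz)).unique ⟨?_, ?_⟩
    · rintro w ⟨p, q, hp, hq, hs, rfl⟩
      obtain ⟨u, u', hu, hu', huy, hu'z, hpe⟩ :=
        aux_riesz_decomp hy hz hp (hs ▸ le_add_of_nonneg_right hq)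
      have hq' : q = (y - u) + (z - u') := by
        have h1 : q = (y + z) - p := eq_sub_of_add_eq' hs
        rw [h1, hpe]; abel
      calc A p + C q = (A u + C (y - u)) + (A u' + C (z - u')) := by
            rw [hpe, hq', map_add, map_add]; abel
        _ ≤ v y + v z := add_le_add
            (hmem hu (sub_nonneg.2 huy) (by abel))
            (hmem hu' (sub_nonneg.2 hu'z) (by abel))
    · intro b hb
      have h1 : ∀ w ∈ dSet A C z, w ≤ b - v y := by
        rintro w ⟨z₁, z₂, hz₁, hz₂, hzs, rfl⟩
        have h2 : v y ≤ b - (A z₁ + C z₂) := by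
          apply (hv y hy).2
          rintro w' ⟨y₁, y₂, hy₁, hy₂, hys, rfl⟩
          rw [le_sub_iff_add_le]
          have e : (A y₁ + C y₂) + (A z₁ + C z₂) = A (y₁ + z₁) + C (y₂ + z₂) := by
            rw [map_add, map_add]; abel
          rw [e]
          exact hb ⟨_, _, add_nonneg hy₁ hz₁, add_nonneg hy₂ hz₂,
            by rw [← hys, ← hzs]; abel, rfl⟩
        exact le_sub_comm.1 h2
      have h3 : v z ≤ b - v y := (hv z hz).2 h1
      exact le_sub_iff_add_le'.1 h3
  have hsmul : ∀ (r : ℝ) (y : E), 0 ≤ r → 0 ≤ y → v (r • y) = r • v y := by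
    intro r y hr hy
    rcases eq_or_lt_of_le hr with h | h
    · rw [← h, zero_smul, zero_smul, hzero]
    · refine (hv (r • y) (smul_nonneg hr hy)).unique ⟨?_, ?_⟩
      · rintro w ⟨p, q, hp, hq, hs, rfl⟩
        have hy' : r⁻¹ • p + r⁻¹ • q = y := by
          rw [← smul_add, hs, smul_smul, inv_mul_cancel₀ h.ne', one_smul]
        have e : A p + C q = r • (A (r⁻¹ • p) + C (r⁻¹ • q)) := by
          rw [smul_add, map_smul, map_smul, smul_smul, smul_smul,
            mul_inv_cancel₀ h.ne', one_smul, one_smul]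
        rw [e]
        exact smul_le_smul_of_nonneg_left
          (hmem (smul_nonneg (inv_nonneg.2 hr) hp) (smul_nonneg (inv_nonneg.2 hr) hq) hy') hr
      · intro b hb
        have h2 : v y ≤ r⁻¹ • b := by
          apply (hv y hy).2
          rintro w ⟨y₁, y₂, h₁, h₂, hs, rfl⟩
          have hmem' : A (r • y₁) + C (r • y₂) ≤ b :=
            hb ⟨_, _, smul_nonneg hr h₁, smul_nonneg hr h₂, by rw [← smul_add, hs], rfl⟩
          have e : A y₁ + C y₂ = r⁻¹ • (A (r • y₁) + C (r • y₂)) := by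
            rw [smul_add, map_smul, map_smul, smul_smul, smul_smul,
              inv_mul_cancel₀ h.ne', one_smul, one_smul]
          rw [e]
          exact smul_le_smul_of_nonneg_left hmem' (inv_nonneg.2 hr)
        calc r • v y ≤ r • (r⁻¹ • b) := smul_le_smul_of_nonneg_left h2 hr
          _ = b := by rw [smul_smul, mul_inv_cancel₀ h.ne', one_smul]
  have hwd : ∀ (a b yy : E), 0 ≤ a → 0 ≤ b → yy = a - b → v yy⁺ - v yy⁻ = v a - v b := by
    intro a b yy ha hb hyy
    have h0 : yy⁺ - yy⁻ = a - b := by rw [posPart_sub_negPart, hyy]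
    have h1 : yy⁺ + b = a + yy⁻ := sub_eq_sub_iff_add_eq_add.1 h0
    have h2 : v yy⁺ + v b = v a + v yy⁻ := by
      rw [← hadd _ _ (posPart_nonneg yy) hb, h1, hadd _ _ ha (negPart_nonneg yy)]
    exact sub_eq_sub_iff_add_eq_add.2 h2
  set vL : E → F := fun yy => v yy⁺ - v yy⁻ with hvL
  have hvadd : ∀ y z : E, vL (y + z) = vL y + vL z := by
    intro y z
    have hdecomp : y + z = (y⁺ + z⁺) - (y⁻ + z⁻) := by
      have : (y⁺ + z⁺) - (y⁻ + z⁻) = (y⁺ - y⁻) + (z⁺ - z⁻) := by abel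
      rw [this, posPart_sub_negPart, posPart_sub_negPart]
    have e1 : vL (y + z) = v (y⁺ + z⁺) - v (y⁻ + z⁻) :=
      hwd _ _ _ (add_nonneg (posPart_nonneg y) (posPart_nonneg z))
        (add_nonneg (negPart_nonneg y) (negPart_nonneg z)) hdecomp
    rw [e1, hadd _ _ (posPart_nonneg y) (posPart_nonneg z),
      hadd _ _ (negPart_nonneg y) (negPart_nonneg z)]
    simp only [hvL]; abel
  have hvsmul : ∀ (r : ℝ) (y : E), vL (r • y) = r • vL y := by
    intro r y
    rcases le_total 0 r with hr | hr
    · have e1 : vL (r • y) = v (r • y⁺) - v (r • y⁻) :=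
        hwd _ _ _ (smul_nonneg hr (posPart_nonneg y)) (smul_nonneg hr (negPart_nonneg y))
          (by rw [← smul_sub, posPart_sub_negPart])
      rw [e1, hsmul r _ hr (posPart_nonneg y), hsmul r _ hr (negPart_nonneg y), ← smul_sub]
    · have hr' : 0 ≤ -r := neg_nonneg.2 hr
      have hyd : r • y = (-r) • y⁻ - (-r) • y⁺ := by
        have h0 : y⁻ - y⁺ = -y := by rw [← neg_sub y⁺ y⁻, posPart_sub_negPart]
        rw [← smul_sub, h0, smul_neg, neg_smul, neg_neg]
      have e1 : vL (r • y) = v ((-r) • y⁻) - v ((-r) • y⁺) :=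
        hwd _ _ _ (smul_nonneg hr' (negPart_nonneg y)) (smul_nonneg hr' (posPart_nonneg y)) hyd
      rw [e1, hsmul _ _ hr' (negPart_nonneg y), hsmul _ _ hr' (posPart_nonneg y)]
      simp only [hvL]
      rw [← smul_sub, ← neg_sub (v y⁺) (v y⁻), smul_neg, neg_smul, neg_neg]
  set V : E →ₗ[ℝ] F := { toFun := vL, map_add' := hvadd, map_smul' := hvsmul } with hVdef
  have hVeq : ∀ y : E, 0 ≤ y → V y = v y := by
    intro y hy
    show vL y = v y
    have e1 : vL y = v y - v 0 := hwd y 0 y hy le_rfl (by rw [sub_zero])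
    rw [e1, hzero, sub_zero]
  refine ⟨V, ⟨?_, ?_, ?_⟩, fun y hy => by rw [hVeq y hy]; exact hv y hy⟩
  · intro y hy
    have h1 : A y + C 0 ≤ v y := hmem hy le_rfl (add_zero y)
    rw [map_zero, add_zero] at h1
    rw [LinearMap.sub_apply, sub_nonneg, hVeq y hy]
    exact h1
  · intro y hy
    have h1 : A 0 + C y ≤ v y := hmem le_rfl hy (zero_add y)
    rw [map_zero, zero_add] at h1
    rw [LinearMap.sub_apply, sub_nonneg, hVeq y hy]
    exact h1
  · intro U hUA hUC y hy
    have hub : U y ∈ upperBounds (dSet A C y) := by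
      rintro w ⟨y₁, y₂, h₁, h₂, hs, rfl⟩
      have e1 : A y₁ ≤ U y₁ := by
        have := hUA y₁ h₁; rwa [LinearMap.sub_apply, sub_nonneg] at this
      have e2 : C y₂ ≤ U y₂ := by
        have := hUC y₂ h₂; rwa [LinearMap.sub_apply, sub_nonneg] at this
      calc A y₁ + C y₂ ≤ U y₁ + U y₂ := add_le_add e1 e2
        _ = U y := by rw [← map_add, hs]
    rw [LinearMap.sub_apply, sub_nonneg, hVeq y hy]
    exact (hv y hy).2 hub

/-- One-step extension for the Hahn–Banach–Kantorovich theorem. -/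
theorem aux_hbk_step (hF : DedekindComplete F) (p : E → F)
    (hp_add : ∀ u v : E, p (u + v) ≤ p u + p v)
    (hp_smul : ∀ r : ℝ, 0 ≤ r → ∀ u : E, p (r • u) = r • p u)
    (f : E →ₗ.[ℝ] F) (hf : ∀ u : f.domain, f u ≤ p u) (hdom : f.domain ≠ ⊤) :
    ∃ g : E →ₗ.[ℝ] F, f < g ∧ ∀ u : g.domain, g u ≤ p u := by
  obtain ⟨x₀, -, hx₀⟩ : ∃ x₀ ∈ (⊤ : Submodule ℝ E), x₀ ∉ f.domain :=
    SetLike.exists_of_lt (lt_top_iff_ne_top.2 hdom)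
  have key : ∀ u v : f.domain, f u - p ((u : E) - x₀) ≤ p ((v : E) + x₀) - f v := by
    intro u v
    rw [sub_le_sub_iff]
    calc f u + f v = f (u + v) := (f.map_add u v).symm
      _ ≤ p ((u : E) + (v : E)) := hf (u + v)
      _ = p (((v : E) + x₀) + ((u : E) - x₀)) := by congr 1; abel
      _ ≤ p ((v : E) + x₀) + p ((u : E) - x₀) := hp_add _ _
  obtain ⟨c, hc⟩ := hF (Set.range fun u : f.domain => f u - p ((u : E) - x₀))
    ⟨_, ⟨0, rfl⟩⟩ ⟨p ((0 : f.domain) + x₀) - f 0, by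
      rintro w ⟨u, rfl⟩; exact key u 0⟩
  have hc₁ : ∀ u : f.domain, f u - p ((u : E) - x₀) ≤ c := fun u => hc.1 ⟨u, rfl⟩
  have hc₂ : ∀ v : f.domain, c ≤ p ((v : E) + x₀) - f v := fun v =>
    hc.2 (by rintro w ⟨u, rfl⟩; exact key u v)
  refine ⟨f.supSpanSingleton x₀ c hx₀, ?_, ?_⟩
  · refine lt_iff_le_not_ge.2 ⟨f.left_le_sup _ _, fun H => ?_⟩
    replace H := LinearPMap.domain_mono.monotone H
    rw [LinearPMap.domain_supSpanSingleton, sup_le_iff, Submodule.span_le,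
      Set.singleton_subset_iff] at H
    exact hx₀ H.2
  · rintro ⟨z, hz⟩
    rw [LinearPMap.domain_supSpanSingleton] at hz
    rcases Submodule.mem_sup.1 hz with ⟨x, hx, y', hy', rfl⟩
    rcases Submodule.mem_span_singleton.1 hy' with ⟨r, rfl⟩
    rw [LinearPMap.supSpanSingleton_apply_mk _ _ _ _ _ hx]
    rcases lt_trichotomy r 0 with hr | hr | hr
    · have hr' : 0 < -r := neg_pos.2 hr
      have h1 := hc₁ ((-r)⁻¹ • ⟨x, hx⟩)
      have h2 := smul_le_smul_of_nonneg_left h1 hr'.le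
      rw [smul_sub, f.map_smul, smul_smul, mul_inv_cancel₀ hr'.ne', one_smul,
        SetLike.val_smul, ← hp_smul (-r) hr'.le, smul_sub, smul_smul,
        mul_inv_cancel₀ hr'.ne', one_smul, neg_smul, sub_neg_eq_add, neg_smul] at h2
      rw [sub_le_iff_le_add] at h2
      calc f ⟨x, hx⟩ + r • c ≤ (-(r • c) + p (x + r • x₀)) + r • c := add_le_add_left h2 _
        _ = p (x + r • x₀) := by abel
    · subst hr
      show f ⟨x, hx⟩ + (0 : ℝ) • c ≤ p (x + (0 : ℝ) • x₀)
      rw [zero_smul, zero_smul, add_zero, add_zero]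
      exact hf ⟨x, hx⟩
    · have h1 := hc₂ (r⁻¹ • ⟨x, hx⟩)
      have h2 := smul_le_smul_of_nonneg_left h1 hr.le
      rw [smul_sub, f.map_smul, smul_smul, mul_inv_cancel₀ hr.ne', one_smul,
        SetLike.val_smul, ← hp_smul r hr.le, smul_add, smul_smul,
        mul_inv_cancel₀ hr.ne', one_smul] at h2
      calc f ⟨x, hx⟩ + r • c ≤ f ⟨x, hx⟩ + (p (x + r • x₀) - f ⟨x, hx⟩) :=
            add_le_add_right h2 _
        _ = p (x + r • x₀) := by abel

/-- Hahn–Banach–Kantorovich extension theorem for Dedekind complete codomains. -/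
theorem aux_hbk (hF : DedekindComplete F) (p : E → F)
    (hp_add : ∀ u v : E, p (u + v) ≤ p u + p v)
    (hp_smul : ∀ r : ℝ, 0 ≤ r → ∀ u : E, p (r • u) = r • p u)
    (f : E →ₗ.[ℝ] F) (hf : ∀ u : f.domain, f u ≤ p u) :
    ∃ g : E →ₗ[ℝ] F, (∀ u : f.domain, g u = f u) ∧ ∀ u : E, g u ≤ p u := by
  set S := { h : E →ₗ.[ℝ] F | ∀ u : h.domain, h u ≤ p u } with hS
  have hSc : ∀ c ⊆ S, IsChain (· ≤ ·) c → ∀ y ∈ c, ∃ ub ∈ S, ∀ z ∈ c, z ≤ ub := by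
    intro c hcs c_chain y hy
    have cne : c.Nonempty := ⟨y, hy⟩
    have hcd : DirectedOn (· ≤ ·) c := c_chain.directedOn
    refine ⟨LinearPMap.sSup c hcd, ?_, fun _ hz => LinearPMap.le_sSup hcd hz⟩
    rintro ⟨x, hx⟩
    have hdir : DirectedOn (· ≤ ·) (LinearPMap.domain '' c) :=
      directedOn_image.2 (hcd.mono @(LinearPMap.domain_mono.monotone))
    rcases (Submodule.mem_sSup_of_directed (cne.image _) hdir).1 hx with ⟨_, ⟨g, hgc, rfl⟩, hgx⟩
    have hg := LinearPMap.le_sSup hcd hgc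
    have heq : g ⟨x, hgx⟩ = (LinearPMap.sSup c hcd) ⟨x, hx⟩ := hg.2 rfl
    rw [← heq]
    exact hcs hgc ⟨x, hgx⟩
  obtain ⟨q, hfq, hqmax⟩ := zorn_le_nonempty₀ S hSc f hf
  have hqS : ∀ u : q.domain, q u ≤ p u := hqmax.prop
  have hqtop : q.domain = ⊤ := by
    by_contra hq_top
    obtain ⟨r, hlt, hr⟩ := aux_hbk_step hF p hp_add hp_smul q hqS hq_top
    exact hlt.not_ge (hqmax.2 hr hlt.le)
  set g : E →ₗ[ℝ] F :=
    q.toFun.comp (LinearMap.id.codRestrict q.domain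
      (fun u => by rw [hqtop]; exact Submodule.mem_top)) with hg
  have hgq : ∀ u : q.domain, g (u : E) = q u := by
    intro u
    show q.toFun ⟨(u : E), _⟩ = q.toFun u
    congr
  refine ⟨g, fun u => ?_, fun u => hqS ⟨u, by rw [hqtop]; exact Submodule.mem_top⟩⟩
  have e1 : f u = q ⟨(u : E), hfq.1 u.2⟩ := hfq.2 rfl
  rw [e1]
  exact hgq ⟨(u : E), hfq.1 u.2⟩

/-- Given `0 ≤ y ≤ T x` with `T` positive and `0 ≤ x`, there is a positive operator
`S ≤ T` with `S x = y`. -/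
theorem aux_subop (hF : DedekindComplete F) {T : E →ₗ[ℝ] F} (hT : Positive T)
    {x : E} (hx : 0 ≤ x) {y : F} (hy0 : 0 ≤ y) (hyx : y ≤ T x) :
    ∃ S : E →ₗ[ℝ] F, Positive S ∧ Positive (T - S) ∧ S x = y := by
  have hmono : ∀ {a b : E}, a ≤ b → T a ≤ T b := by
    intro a b hab
    have h1 := hT (b - a) (sub_nonneg.2 hab)
    rw [map_sub] at h1
    exact sub_nonneg.1 h1
  set p : E → F := fun u => T u⁺ with hp
  have hp_add : ∀ u v : E, p (u + v) ≤ p u + p v := by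
    intro u v
    have h1 : (u + v)⁺ ≤ u⁺ + v⁺ := by
      rw [posPart_def]
      exact sup_le (add_le_add (le_posPart u) (le_posPart v))
        (add_nonneg (posPart_nonneg u) (posPart_nonneg v))
    calc p (u + v) = T (u + v)⁺ := rfl
      _ ≤ T (u⁺ + v⁺) := hmono h1
      _ = p u + p v := by rw [map_add]
  have hp_smul : ∀ r : ℝ, 0 ≤ r → ∀ u : E, p (r • u) = r • p u := by
    intro r hr u
    show T (r • u)⁺ = r • T u⁺
    rw [aux_smul_posPart r hr u, map_smul]
  by_cases hx0 : x = 0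
  · have hy' : y = 0 := le_antisymm (by rwa [hx0, map_zero] at hyx) hy0
    refine ⟨0, fun u hu => le_rfl, ?_, by simp [hy']⟩
    rw [sub_zero]
    exact hT
  · set f : E →ₗ.[ℝ] F := LinearPMap.mkSpanSingleton (K := ℝ) x y hx0 with hfdef
    have hf : ∀ u : f.domain, f u ≤ p u := by
      rintro ⟨u, hu⟩
      rcases Submodule.mem_span_singleton.1 hu with ⟨r, rfl⟩
      rw [LinearPMap.mkSpanSingleton'_apply, RingHom.id_apply]
      rcases le_total 0 r with hr | hr
      · have e1 : p (r • x) = r • T x := by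
          rw [hp_smul r hr x]
          congr 1
          show T x⁺ = T x
          rw [posPart_eq_self.2 hx]
        rw [e1]
        exact smul_le_smul_of_nonneg_left hyx hr
      · have h1 : r • x ≤ 0 := by
          have h2 : 0 ≤ (-r) • x := smul_nonneg (neg_nonneg.2 hr) hx
          rw [show r • x = -((-r) • x) from by rw [neg_smul, neg_neg]]
          exact neg_nonpos.2 h2
        have h3 : p (r • x) = 0 := by
          show T (r • x)⁺ = 0
          rw [posPart_eq_zero.2 h1, map_zero]
        rw [h3, show r • y = -((-r) • y) from by rw [neg_smul, neg_neg]]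
        exact neg_nonpos.2 (smul_nonneg (neg_nonneg.2 hr) hy0)
    obtain ⟨g, hgf, hgp⟩ := aux_hbk hF p hp_add hp_smul f hf
    refine ⟨g, ?_, ?_, ?_⟩
    · intro u hu
      have h1 : g (-u) ≤ p (-u) := hgp (-u)
      have h2 : p (-u) = 0 := by
        show T (-u)⁺ = 0
        rw [posPart_eq_zero.2 (neg_nonpos.2 hu), map_zero]
      rw [map_neg, h2] at h1
      exact neg_nonpos.1 h1
    · intro u hu
      rw [LinearMap.sub_apply, sub_nonneg]
      have h1 := hgp u
      rwa [show p u = T u from by show T u⁺ = T u; rw [posPart_eq_self.2 hu]] at h1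
    · have hxm : x ∈ f.domain := by
        rw [hfdef]
        exact Submodule.mem_span_singleton_self x
      have h1 : g x = f ⟨x, hxm⟩ := hgf ⟨x, hxm⟩
      rw [h1]
      exact LinearPMap.mkSpanSingleton_apply ℝ ℝ hx0 y

end AuxProof

open TwoSided in
theorem MAB_apply' {W X Y Z : Type*}
    [AddCommGroup W] [Lattice W] [Module ℝ W]
    [AddCommGroup X] [Lattice X] [Module ℝ X]
    [AddCommGroup Y] [Lattice Y] [Module ℝ Y]
    [AddCommGroup Z] [Lattice Z] [Module ℝ Z]
    (A : Y →ₗ[ℝ] Z) (B : W →ₗ[ℝ] X) (T : X →ₗ[ℝ] Y) (w : W) :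
    MAB A B T w = A (T (B w)) := rfl

open TwoSided in
theorem statement2 {W X Y Z : Type*}
    [AddCommGroup W] [Lattice W] [CovariantClass W W (· + ·) (· ≤ ·)]
    [Module ℝ W] [PosSMulMono ℝ W]
    [AddCommGroup X] [Lattice X] [CovariantClass X X (· + ·) (· ≤ ·)]
    [Module ℝ X] [PosSMulMono ℝ X]
    [AddCommGroup Y] [Lattice Y] [CovariantClass Y Y (· + ·) (· ≤ ·)]
    [Module ℝ Y] [PosSMulMono ℝ Y]
    [AddCommGroup Z] [Lattice Z] [CovariantClass Z Z (· + ·) (· ≤ ·)]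
    [Module ℝ Z] [PosSMulMono ℝ Z]
    (hW : DedekindComplete W) (hX : DedekindComplete X)
    (hY : DedekindComplete Y) (hZ : DedekindComplete Z)
    (B₀ : W →ₗ[ℝ] X) (hB₀ : Positive B₀) :
    (∀ (A absA : Y →ₗ[ℝ] Z), IsRegular A → IsModulus A absA →
      IsModulus2 (MAB A B₀) (MAB absA B₀)) ∧
    (∀ (A C S : Y →ₗ[ℝ] Z), IsRegular A → IsRegular C → IsOpSup A C S →
      IsOpSup2 (MAB A B₀) (MAB C B₀) (MAB S B₀)) := by
  have hsup : ∀ (A C S : Y →ₗ[ℝ] Z), IsRegular A → IsRegular C → IsOpSup A C S →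
      IsOpSup2 (MAB A B₀) (MAB C B₀) (MAB S B₀) := by
    intro A C S hA hC hS
    obtain ⟨V, hV, hVlub⟩ := aux_rk hZ hA hC
    have hSV : ∀ y : Y, 0 ≤ y → S y = V y := by
      intro y hy
      have h1 := hS.2.2 V hV.1 hV.2.1 y hy
      have h2 := hV.2.2 S hS.1 hS.2.1 y hy
      rw [LinearMap.sub_apply, sub_nonneg] at h1 h2
      exact le_antisymm h1 h2
    have hSlub : ∀ y : Y, 0 ≤ y → IsLUB (dSet A C y) (S y) := by
      intro y hy
      rw [hSV y hy]
      exact hVlub y hy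
    refine ⟨?_, ?_, ?_⟩
    · intro T hT w hw
      have h0 : (0 : Y) ≤ T (B₀ w) := hT _ (hB₀ w hw)
      have h1 := hS.1 _ h0
      rw [LinearMap.sub_apply] at h1
      simp only [LinearMap.sub_apply, MAB_apply']
      exact h1
    · intro T hT w hw
      have h0 : (0 : Y) ≤ T (B₀ w) := hT _ (hB₀ w hw)
      have h1 := hS.2.1 _ h0
      rw [LinearMap.sub_apply] at h1
      simp only [LinearMap.sub_apply, MAB_apply']
      exact h1
    · intro Ξ h1 h2 T hT w hw
      simp only [LinearMap.sub_apply, MAB_apply']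
      rw [sub_nonneg]
      have hx : (0 : X) ≤ B₀ w := hB₀ w hw
      have hy : (0 : Y) ≤ T (B₀ w) := hT _ hx
      refine (hSlub _ hy).2 ?_
      rintro z ⟨y₁, y₂, hy₁, hy₂, hsum, rfl⟩
      obtain ⟨T₁, hT₁pos, hT₁le, hT₁x⟩ :=
        aux_subop hY hT hx hy₁ (hsum ▸ le_add_of_nonneg_right hy₂)
      have hT₂x : (T - T₁) (B₀ w) = y₂ := by
        rw [LinearMap.sub_apply, hT₁x, ← hsum]
        abel
      have e1 : A y₁ ≤ Ξ T₁ w := by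
        have h3 := h1 T₁ hT₁pos w hw
        rw [LinearMap.sub_apply, LinearMap.sub_apply, sub_nonneg, MAB_apply', hT₁x] at h3
        exact h3
      have e2 : C y₂ ≤ Ξ (T - T₁) w := by
        have h3 := h2 (T - T₁) hT₁le w hw
        rw [LinearMap.sub_apply, LinearMap.sub_apply, sub_nonneg, MAB_apply', hT₂x] at h3
        exact h3
      calc A y₁ + C y₂ ≤ Ξ T₁ w + Ξ (T - T₁) w := add_le_add e1 e2
        _ = Ξ T w := by
            rw [← LinearMap.add_apply, ← map_add, show T₁ + (T - T₁) = T from by abel]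
  refine ⟨?_, hsup⟩
  intro A absA hA habs
  have hnA : IsRegular (-A) := by
    obtain ⟨P, Q, hP, hQ, hPQ⟩ := hA
    exact ⟨Q, P, hQ, hP, by rw [hPQ]; abel⟩
  have h2 := hsup A (-A) absA hA hnA habs
  have hMAB : MAB (-A) B₀ = -(MAB A B₀) := by
    apply LinearMap.ext; intro T; apply LinearMap.ext; intro w
    show (-A) (T (B₀ w)) = (-(MAB A B₀) T) w
    rw [LinearMap.neg_apply, LinearMap.neg_apply, MAB_apply']
  rw [hMAB] at h2
  exact h2
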